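/- Assume ∫_τ^∞ ds/r(s) = ∞; that for some ε > 0 both ∫_ε^∞ du/φ(u) < ∞ and ∫_{−∞}^{−ε} du/(−φ(u)) < ∞; that ∫_τ^∞ p(u) du < ∞; and that Σ_{j=0}^∞ ∫_{t_j}^{ζ_j} (1/r(s))·(∫_{t_{j+1}}^∞ p(u) du) ds = ∞. Then every solution x of (E) is oscillatory. -/

import Mathlib

open MeasureTheory Set Filter

lemma tsum_le_range_add_tail (f : ℕ → ENNReal) (K : ℕ) :
    ∑' j, f j ≤ (∑ j ∈ Finset.range K, f j) + ∑' i, f (i + K) := by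
  rw [ENNReal.tsum_eq_iSup_sum]
  refine iSup_le fun s => ?_
  rw [← Finset.sum_filter_add_sum_filter_not s (fun j => j < K)]
  refine add_le_add ?_ ?_
  · exact Finset.sum_le_sum_of_subset (fun j hj => Finset.mem_range.2 (Finset.mem_filter.1 hj).2)
  · calc ∑ j ∈ s.filter (fun j => ¬ j < K), f j
        = ∑ i ∈ (s.filter (fun j => ¬ j < K)).image (· - K), f (i + K) := by
          rw [Finset.sum_image]
          · refine Finset.sum_congr rfl fun j hj => ?_
            have := (Finset.mem_filter.1 hj).2
            rw [Nat.sub_add_cancel (le_of_not_gt this)]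
          · intro a ha b hb hab
            have ha' := le_of_not_gt (Finset.mem_filter.1 ha).2
            have hb' := le_of_not_gt (Finset.mem_filter.1 hb).2
            simp only at hab
            omega
      _ ≤ ∑' i, f (i + K) := ENNReal.sum_le_tsum _

lemma lintegral_Ioi_neg (g : ℝ → ENNReal) (c : ℝ) :
    ∫⁻ u in Ioi c, g (-u) = ∫⁻ u in Iio (-c), g u := by
  have hpre : (Neg.neg : ℝ → ℝ) ⁻¹' (Iio (-c)) = Ioi c := by
    ext u; simp [neg_lt_neg_iff]
  have h := (Measure.measurePreserving_neg (volume : Measure ℝ)).setLIntegral_comp_preimage_emb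
      measurableEmbedding_neg g (Iio (-c))
  rw [hpre] at h
  exact h


lemma exists_large_integral_inv_r (r : ℝ → ℝ) (t0 : ℝ) (hr_cont : ContinuousOn r (Ici t0))
    (hr_pos : ∀ s ∈ Ici t0, 0 < r s)
    (hr_int : ∫⁻ s in Ioi t0, ENNReal.ofReal (1 / r s) = ⊤)
    (s1 : ℝ) (hs1 : t0 ≤ s1) (M : ℝ) :
    ∃ s, s1 ≤ s ∧ M < ∫ u in s1..s, 1 / r u := by
  by_contra hcon
  push_neg at hcon
  have hcont1r : ContinuousOn (fun u => 1 / r u) (Ici t0) :=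
    continuousOn_const.div hr_cont (fun s hs => ne_of_gt (hr_pos s hs))
  have hsn : ∀ n : ℕ, t0 ≤ s1 + n := fun n => by
    have : (0:ℝ) ≤ n := Nat.cast_nonneg n
    linarith
  have hsn1 : ∀ n : ℕ, t0 ≤ s1 + n + 1 := fun n => by
    have := hsn n
    linarith
  have hII : ∀ a b : ℝ, t0 ≤ a → t0 ≤ b → IntervalIntegrable (fun u => 1 / r u) volume a b := by
    intro a b ha hb
    apply ContinuousOn.intervalIntegrable
    apply hcont1r.mono
    intro s hs
    rcases Set.mem_uIcc.1 hs with h | h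
    · exact le_trans ha h.1
    · exact le_trans hb h.1
  -- partial sums over unit intervals
  have hsumN : ∀ N : ℕ, ∑ n ∈ Finset.range N, (∫ u in (s1+n)..(s1+n+1), 1 / r u)
      = ∫ u in s1..(s1+N), 1 / r u := by
    intro N
    induction N with
    | zero => simp
    | succ N ih =>
      rw [Finset.sum_range_succ, ih]
      have h1 : IntervalIntegrable (fun u => 1 / r u) volume s1 (s1+N) :=
        hII _ _ hs1 (hsn N)
      have h2 : IntervalIntegrable (fun u => 1 / r u) volume (s1+N) (s1+N+1) :=
        hII _ _ (hsn N) (hsn1 N)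
      rw [intervalIntegral.integral_add_adjacent_intervals h1 h2]
      norm_num [add_assoc]
  -- the union decomposition of Ioi s1
  have hunion : Ioi s1 = ⋃ n : ℕ, Ioc (s1 + n) (s1 + n + 1) := by
    ext s
    simp only [mem_Ioi, mem_iUnion, mem_Ioc]
    constructor
    · intro hs
      refine ⟨⌈s - s1⌉₊ - 1, ?_, ?_⟩
      · have h1 : (1:ℕ) ≤ ⌈s - s1⌉₊ := Nat.one_le_ceil_iff.2 (sub_pos.2 hs)
        have h2 : ((⌈s - s1⌉₊ - 1 : ℕ) : ℝ) = (⌈s - s1⌉₊ : ℝ) - 1 := by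
          push_cast [Nat.cast_sub h1]; ring
        have h3 : (⌈s - s1⌉₊ : ℝ) < (s - s1) + 1 := Nat.ceil_lt_add_one (le_of_lt (sub_pos.2 hs))
        rw [h2]; linarith
      · have h1 : (1:ℕ) ≤ ⌈s - s1⌉₊ := Nat.one_le_ceil_iff.2 (sub_pos.2 hs)
        have h2 : ((⌈s - s1⌉₊ - 1 : ℕ) : ℝ) = (⌈s - s1⌉₊ : ℝ) - 1 := by
          push_cast [Nat.cast_sub h1]; ring
        have h4 : s - s1 ≤ (⌈s - s1⌉₊ : ℝ) := Nat.le_ceil _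
        rw [h2]; linarith
    · rintro ⟨n, hn1, _⟩
      have : (0:ℝ) ≤ n := Nat.cast_nonneg n
      linarith
  have hdisj : Pairwise (Function.onFun Disjoint fun n : ℕ => Ioc (s1 + n) (s1 + n + 1)) := by
    intro m n hmn
    rcases lt_or_gt_of_ne hmn with h | h
    · apply Set.disjoint_left.2
      rintro y ⟨_, hy2⟩ ⟨hy3, _⟩
      have : (m:ℝ) + 1 ≤ n := by exact_mod_cast Nat.succ_le_of_lt h
      linarith
    · apply Set.disjoint_left.2
      rintro y ⟨hy1, _⟩ ⟨_, hy4⟩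
      have : (n:ℝ) + 1 ≤ m := by exact_mod_cast Nat.succ_le_of_lt h
      linarith
  have hlint_union : ∫⁻ u in Ioi s1, ENNReal.ofReal (1 / r u)
      = ∑' n : ℕ, ∫⁻ u in Ioc (s1 + n) (s1 + n + 1), ENNReal.ofReal (1 / r u) := by
    rw [hunion]
    exact lintegral_iUnion (fun n => measurableSet_Ioc) hdisj _
  have hpiece : ∀ n : ℕ, ∫⁻ u in Ioc (s1 + n) (s1 + n + 1), ENNReal.ofReal (1 / r u)
      = ENNReal.ofReal (∫ u in (s1+n)..(s1+n+1), 1 / r u) := by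
    intro n
    have hab : (s1:ℝ) + n ≤ s1 + n + 1 := by linarith
    rw [intervalIntegral.integral_of_le hab]
    rw [MeasureTheory.ofReal_integral_eq_lintegral_ofReal]
    · have : IntegrableOn (fun u => 1 / r u) (Icc (s1+n) (s1+n+1)) volume := by
        apply ContinuousOn.integrableOn_Icc
        exact hcont1r.mono (fun s hs => le_trans (hsn n) hs.1)
      exact this.mono_set Ioc_subset_Icc_self
    · apply ae_restrict_of_forall_mem measurableSet_Ioc
      intro y hy
      have hy0 : t0 ≤ y := le_trans (hsn n) (le_of_lt hy.1)
      exact one_div_nonneg.2 (le_of_lt (hr_pos y hy0))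
  have htail : ∫⁻ u in Ioi s1, ENNReal.ofReal (1 / r u) ≤ ENNReal.ofReal M := by
    rw [hlint_union]
    rw [ENNReal.tsum_eq_iSup_sum]
    refine iSup_le fun sfin => ?_
    obtain ⟨N, hN⟩ : ∃ N, sfin ⊆ Finset.range N := ⟨sfin.sup id + 1,
      fun j hj => Finset.mem_range.2 (Nat.lt_succ_of_le (Finset.le_sup (f := id) hj))⟩
    calc ∑ n ∈ sfin, ∫⁻ u in Ioc (s1 + n) (s1 + n + 1), ENNReal.ofReal (1 / r u)
        ≤ ∑ n ∈ Finset.range N, ∫⁻ u in Ioc (s1 + n) (s1 + n + 1), ENNReal.ofReal (1 / r u) :=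
          Finset.sum_le_sum_of_subset hN
      _ = ENNReal.ofReal (∑ n ∈ Finset.range N, ∫ u in (s1+n)..(s1+n+1), 1 / r u) := by
          rw [ENNReal.ofReal_sum_of_nonneg]
          · exact Finset.sum_congr rfl fun n _ => hpiece n
          · intro n _
            apply intervalIntegral.integral_nonneg (by linarith)
            intro u hu
            have : t0 ≤ u := le_trans (hsn n) hu.1
            exact one_div_nonneg.2 (le_of_lt (hr_pos u this))
      _ ≤ ENNReal.ofReal M := by
          rw [hsumN]
          refine ENNReal.ofReal_le_ofReal (hcon _ ?_)
          have : (0:ℝ) ≤ N := Nat.cast_nonneg N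
          linarith
  -- bounded part on Ioc t0 s1
  obtain ⟨C, hC⟩ := (isCompact_Icc (a := t0) (b := s1)).exists_bound_of_continuousOn
    (hcont1r.mono (fun s hs => hs.1))
  have hhead : ∫⁻ u in Ioc t0 s1, ENNReal.ofReal (1 / r u) ≤ ENNReal.ofReal C * ENNReal.ofReal (s1 - t0) := by
    calc ∫⁻ u in Ioc t0 s1, ENNReal.ofReal (1 / r u)
        ≤ ∫⁻ _ in Ioc t0 s1, ENNReal.ofReal C := by
          apply setLIntegral_mono measurable_const
          intro u hu
          exact ENNReal.ofReal_le_ofReal (le_trans (le_abs_self _)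
            (hC u ⟨le_of_lt hu.1, hu.2⟩))
      _ = ENNReal.ofReal C * volume (Ioc t0 s1) := setLIntegral_const _ _
      _ = ENNReal.ofReal C * ENNReal.ofReal (s1 - t0) := by rw [Real.volume_Ioc]
  have hsplit : (⊤ : ENNReal) ≤ ENNReal.ofReal C * ENNReal.ofReal (s1 - t0) + ENNReal.ofReal M := by
    calc (⊤ : ENNReal) = ∫⁻ u in Ioi t0, ENNReal.ofReal (1 / r u) := hr_int.symm
      _ ≤ ∫⁻ u in Ioc t0 s1 ∪ Ioi s1, ENNReal.ofReal (1 / r u) := by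
          apply lintegral_mono_set
          intro u hu
          rcases le_or_gt u s1 with h | h
          · exact Or.inl ⟨hu, h⟩
          · exact Or.inr h
      _ ≤ (∫⁻ u in Ioc t0 s1, ENNReal.ofReal (1 / r u)) + ∫⁻ u in Ioi s1, ENNReal.ofReal (1 / r u) :=
          lintegral_union_le _ _ _
      _ ≤ ENNReal.ofReal C * ENNReal.ofReal (s1 - t0) + ENNReal.ofReal M := add_le_add hhead htail
  have : (⊤ : ENNReal) ≠ ⊤ := by
    refine ne_top_of_le_ne_top ?_ hsplit
    exact ENNReal.add_ne_top.2 ⟨ENNReal.mul_ne_top ENNReal.ofReal_ne_top ENNReal.ofReal_ne_top,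
      ENNReal.ofReal_ne_top⟩
  exact this rfl

-- Key lemma: no eventually positive solution.
lemma noEvPos
    (t ζ : ℕ → ℝ) (ht_mono : StrictMono t)
    (ht_top : Tendsto t atTop atTop)
    (hζ : ∀ k : ℕ, ζ k ∈ Icc (t k) (t (k+1)))
    (r : ℝ → ℝ) (hr_cont : ContinuousOn r (Ici (t 0)))
    (hr_pos : ∀ s ∈ Ici (t 0), 0 < r s)
    (f : ℝ → ℝ → ℝ)
    (hfc : ∀ c : ℝ, ContinuousOn (fun s => f s c) (Ici (t 0)))
    (hf_pos : ∀ s ∈ Ici (t 0), ∀ y : ℝ, 0 < y → 0 < f s y)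
    (x x' : ℝ → ℝ)
    (hx_deriv : ∀ s ∈ Ici (t 0), HasDerivAt x (x' s) s)
    (hx'_cont : ContinuousOn x' (Ici (t 0)))
    (hE : ∀ k : ℕ, ∀ s ∈ Ioo (t k) (t (k+1)),
      HasDerivAt (fun u => r u * x' u) (-(f s (x (ζ k)))) s)
    (p : ℝ → ℝ) (hp_cont : ContinuousOn p (Ici (t 0)))
    (hp_nonneg : ∀ s ∈ Ici (t 0), 0 ≤ p s)
    (φ : ℝ → ℝ) (hφ_cont : Continuous φ) (hφ_mono : Monotone φ)
    (hφ_pos : ∀ y : ℝ, 0 < y → 0 < φ y)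
    (hfp_pos : ∀ s ∈ Ici (t 0), ∀ y : ℝ, 0 < y → p s * φ y ≤ f s y)
    (hr_int : ∫⁻ s in Ioi (t 0), ENNReal.ofReal (1 / r s) = ⊤)
    (ε : ℝ) (hε : 0 < ε)
    (hφ_int_pos : ∫⁻ u in Ioi ε, ENNReal.ofReal (1 / φ u) < ⊤)
    (hp_int : ∫⁻ u in Ioi (t 0), ENNReal.ofReal (p u) < ⊤)
    (hsum : ∑' j : ℕ, ENNReal.ofReal
        (∫ s in t j..ζ j, (1 / r s) * (∫ u in Ioi (t (j+1)), p u)) = ⊤)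
    (T : ℝ) (hT : ∀ s, T ≤ s → 0 < x s) : False := by
  -- basic facts
  have ht0 : ∀ k, t 0 ≤ t k := fun k => ht_mono.monotone (Nat.zero_le k)
  obtain ⟨K, hK⟩ : ∃ K, T ≤ t K := (ht_top.eventually_ge_atTop T).exists
  have htK0 : t 0 ≤ t K := ht0 K
  have hmemK : ∀ s, t K ≤ s → s ∈ Ici (t 0) := fun s hs => le_trans htK0 hs
  have hxpos : ∀ s, t K ≤ s → 0 < x s := fun s hs => hT s (le_trans hK hs)
  set g : ℝ → ℝ := fun u => r u * x' u with hg_def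
  have hg_cont : ContinuousOn g (Ici (t 0)) := hr_cont.mul hx'_cont
  have hζ0 : ∀ k, t 0 ≤ ζ k := fun k => le_trans (ht0 k) (hζ k).1
  -- FTC for x
  have FTCx : ∀ u v : ℝ, t 0 ≤ u → u ≤ v → ∫ s in u..v, x' s = x v - x u := by
    intro u v hu huv
    apply intervalIntegral.integral_eq_sub_of_hasDerivAt
    · intro s hs
      rw [uIcc_of_le huv] at hs
      exact hx_deriv s (le_trans hu hs.1)
    · apply ContinuousOn.intervalIntegrable
      apply hx'_cont.mono
      rw [uIcc_of_le huv]
      exact fun s hs => le_trans hu hs.1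
  -- FTC for g on a single interval
  have gFTC : ∀ k : ℕ, ∀ u v : ℝ, t k ≤ u → u ≤ v → v ≤ t (k+1) →
      ∫ s in u..v, f s (x (ζ k)) = g u - g v := by
    intro k u v hu huv hv
    have hcont : ContinuousOn (fun s => -(f s (x (ζ k)))) (Icc u v) := by
      apply ContinuousOn.neg
      exact (hfc (x (ζ k))).mono (fun s hs => le_trans (le_trans (ht0 k) hu) hs.1)
    have hint : IntervalIntegrable (fun s => -(f s (x (ζ k)))) volume u v := by
      apply ContinuousOn.intervalIntegrable
      rwa [uIcc_of_le huv]
    have := intervalIntegral.integral_eq_sub_of_hasDeriv_right_of_le huv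
      (hg_cont.mono (fun s hs => le_trans (le_trans (ht0 k) hu) hs.1))
      (fun s hs => ((hE k s ⟨lt_of_le_of_lt hu hs.1, lt_of_lt_of_le hs.2 hv⟩).hasDerivWithinAt))
      hint
    have h2 : ∫ s in u..v, -(f s (x (ζ k))) = -∫ s in u..v, f s (x (ζ k)) :=
      intervalIntegral.integral_neg
    rw [h2] at this
    linarith
  -- g is antitone on each interval beyond K
  have hg_anti_piece : ∀ k : ℕ, t K ≤ t k → ∀ u v : ℝ, t k ≤ u → u ≤ v → v ≤ t (k+1) →
      g v ≤ g u := by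
    intro k hk u v hu huv hv
    have hpos : 0 < x (ζ k) := hxpos _ (le_trans hk (hζ k).1)
    have h1 := gFTC k u v hu huv hv
    have h2 : 0 ≤ ∫ s in u..v, f s (x (ζ k)) := by
      apply intervalIntegral.integral_nonneg huv
      intro s hs
      exact le_of_lt (hf_pos s (le_trans (le_trans (ht0 k) hu) hs.1) _ hpos)
    linarith
  -- g is antitone on [t K, ∞)
  have hg_anti : ∀ u v : ℝ, t K ≤ u → u ≤ v → g v ≤ g u := by
    have claim : ∀ n : ℕ, ∀ u v : ℝ, t K ≤ u → u ≤ v → v ≤ t (K+n) → g v ≤ g u := by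
      intro n
      induction n with
      | zero =>
        intro u v hu huv hv
        have : u = v := le_antisymm huv (le_trans hv hu)
        rw [this]
      | succ n ih =>
        intro u v hu huv hv
        by_cases hv' : v ≤ t (K+n)
        · exact ih u v hu huv hv'
        · push_neg at hv'
          have hKn : t K ≤ t (K+n) := ht_mono.monotone (Nat.le_add_right K n)
          by_cases hu' : t (K+n) ≤ u
          · exact hg_anti_piece (K+n) hKn u v hu' huv hv
          · push_neg at hu'
            have h1 : g v ≤ g (t (K+n)) :=
              hg_anti_piece (K+n) hKn (t (K+n)) v le_rfl (le_of_lt hv') hv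
            have h2 : g (t (K+n)) ≤ g u := ih u (t (K+n)) hu (le_of_lt hu') le_rfl
            linarith
    intro u v hu huv
    obtain ⟨N, hN⟩ : ∃ N, v ≤ t N := (ht_top.eventually_ge_atTop v).exists
    exact claim N u v hu huv (le_trans hN (ht_mono.monotone (Nat.le_add_left N K)))
  by_cases hA : ∃ s1, t K ≤ s1 ∧ g s1 < 0
  · -- Case A: r x' eventually negative, x → -∞
    obtain ⟨s1, hs1K, hgs1⟩ := hA
    set c : ℝ := -g s1 with hc_def
    have hc_pos : 0 < c := by simp only [hc_def]; linarith
    have hs1_mem : s1 ∈ Ici (t 0) := hmemK s1 hs1K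
    have hx'le : ∀ u, s1 ≤ u → x' u ≤ -c * (1 / r u) := by
      intro u hu
      have hgu : g u ≤ -c := by
        have := hg_anti s1 u hs1K hu
        simp only [hc_def]; linarith
      have hru : 0 < r u := hr_pos u (le_trans hs1_mem hu)
      rw [show -c * (1 / r u) = -c / r u by ring, le_div_iff₀ hru]
      calc x' u * r u = g u := mul_comm _ _
        _ ≤ -c := hgu
    have key : ∀ s, s1 ≤ s → x s ≤ x s1 - c * ∫ u in s1..s, 1 / r u := by
      intro s hs
      have hint1 : IntervalIntegrable x' volume s1 s := by
        apply ContinuousOn.intervalIntegrable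
        apply hx'_cont.mono
        rw [uIcc_of_le hs]
        exact fun u hu => le_trans hs1_mem hu.1
      have hint2 : IntervalIntegrable (fun u => -c * (1 / r u)) volume s1 s := by
        apply ContinuousOn.intervalIntegrable
        apply (continuousOn_const.mul (continuousOn_const.div hr_cont
          (fun u hu => ne_of_gt (hr_pos u hu)))).mono
        rw [uIcc_of_le hs]
        exact fun u hu => le_trans hs1_mem hu.1
      have h1 : ∫ u in s1..s, x' u ≤ ∫ u in s1..s, -c * (1 / r u) := by
        apply intervalIntegral.integral_mono_on hs hint1 hint2
        exact fun u hu => hx'le u hu.1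
      rw [FTCx s1 s hs1_mem hs, intervalIntegral.integral_const_mul] at h1
      linarith
    obtain ⟨s, hs, hMs⟩ := exists_large_integral_inv_r r (t 0) hr_cont hr_pos hr_int s1 hs1_mem
      (x s1 / c)
    have hxs : 0 < x s := hxpos s (le_trans hs1K hs)
    have := key s hs
    have hcM : c * (x s1 / c) = x s1 := by field_simp
    nlinarith [mul_lt_mul_of_pos_left hMs hc_pos]
  · -- Case B
    push_neg at hA
    have hx'_nonneg : ∀ s, t K ≤ s → 0 ≤ x' s := by
      intro s hs
      have hgs := hA s hs
      have hrs := hr_pos s (hmemK s hs)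
      by_contra hneg
      push_neg at hneg
      have : g s < 0 := mul_neg_of_pos_of_neg hrs hneg
      linarith
    have hx_mono : ∀ u v, t K ≤ u → u ≤ v → x u ≤ x v := by
      intro u v hu huv
      have h1 := FTCx u v (hmemK u hu) huv
      have h2 : 0 ≤ ∫ s in u..v, x' s := intervalIntegral.integral_nonneg huv
        (fun s hs => hx'_nonneg s (le_trans hu hs.1))
      linarith
    set m := x (t K) with hm_def
    have hm : 0 < m := hxpos _ le_rfl
    have hφm : 0 < φ m := hφ_pos m hm
    -- p is integrable on (t 0, ∞)
    have hp_integrable : IntegrableOn p (Ioi (t 0)) volume := by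
      constructor
      · exact (hp_cont.aestronglyMeasurable measurableSet_Ici).mono_measure
          (Measure.restrict_mono Ioi_subset_Ici_self le_rfl)
      · rw [hasFiniteIntegral_iff_ofReal]
        · exact hp_int
        · exact ae_restrict_of_forall_mem measurableSet_Ioi
            (fun u hu => hp_nonneg u (mem_Ici.2 (le_of_lt (mem_Ioi.1 hu))))
    have hp_int_on : ∀ j : ℕ, IntegrableOn p (Ioi (t j)) volume := fun j =>
      hp_integrable.mono_set (Ioi_subset_Ioi (ht0 j))
    have hpII : ∀ a b : ℝ, t 0 ≤ a → t 0 ≤ b → IntervalIntegrable p volume a b := by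
      intro a b ha hb
      apply ContinuousOn.intervalIntegrable
      apply hp_cont.mono
      intro s hs
      rcases Set.mem_uIcc.1 hs with h | h
      · exact le_trans ha h.1
      · exact le_trans hb h.1
    have hP_nonneg : ∀ j : ℕ, 0 ≤ ∫ u in Ioi (t j), p u := fun j =>
      setIntegral_nonneg measurableSet_Ioi
        (fun u hu => hp_nonneg u (le_trans (ht0 j) (le_of_lt hu)))
    -- telescoping lower bound for g
    have hg_low : ∀ j, K ≤ j → φ (x (ζ j)) * (∫ u in Ioi (t (j+1)), p u) ≤ g (t (j+1)) := by
      intro j hj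
      have hζj_tK : t K ≤ ζ j := le_trans (ht_mono.monotone hj) (hζ j).1
      have claim : ∀ N, j+1 ≤ N →
          φ (x (ζ j)) * (∫ u in t (j+1)..t N, p u) + g (t N) ≤ g (t (j+1)) := by
        intro N hN
        induction N with
        | zero => omega
        | succ N ih =>
          by_cases hNj : N + 1 = j + 1
          · rw [hNj]
            simp
          · have hN' : j + 1 ≤ N := by omega
            have ihN := ih hN'
            have hKN : K ≤ N := by omega
            have hζN_tK : t K ≤ ζ N := le_trans (ht_mono.monotone hKN) (hζ N).1
            have hζN_pos : 0 < x (ζ N) := hxpos _ hζN_tK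
            have htN_le : t N ≤ t (N+1) := (ht_mono (Nat.lt_succ_self N)).le
            have hgftc := gFTC N (t N) (t (N+1)) le_rfl htN_le le_rfl
            have hcomp : ∀ s ∈ Icc (t N) (t (N+1)), φ (x (ζ j)) * p s ≤ f s (x (ζ N)) := by
              intro s hs
              have hs0 : s ∈ Ici (t 0) := le_trans (ht0 N) hs.1
              have h1 := hfp_pos s hs0 (x (ζ N)) hζN_pos
              have h2 : φ (x (ζ j)) ≤ φ (x (ζ N)) := by
                apply hφ_mono
                apply hx_mono _ _ hζj_tK
                exact le_trans (hζ j).2 (le_trans (ht_mono.monotone hN') (hζ N).1)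
              have h3 := hp_nonneg s hs0
              nlinarith
            have hint1 : IntervalIntegrable (fun s => φ (x (ζ j)) * p s) volume (t N) (t (N+1)) :=
              (hpII _ _ (ht0 N) (ht0 (N+1))).const_mul _
            have hint2 : IntervalIntegrable (fun s => f s (x (ζ N))) volume (t N) (t (N+1)) := by
              apply ContinuousOn.intervalIntegrable
              apply (hfc (x (ζ N))).mono
              rw [uIcc_of_le htN_le]
              exact fun s hs => le_trans (ht0 N) hs.1
            have hmono := intervalIntegral.integral_mono_on htN_le hint1 hint2 hcomp
            rw [intervalIntegral.integral_const_mul] at hmono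
            have hadd := intervalIntegral.integral_add_adjacent_intervals
              (hpII (t (j+1)) (t N) (ht0 (j+1)) (ht0 N))
              (hpII (t N) (t (N+1)) (ht0 N) (ht0 (N+1)))
            rw [← hadd, mul_add]
            linarith
      have hlim : Tendsto (fun N => ∫ u in t (j+1)..t N, p u) atTop
          (nhds (∫ u in Ioi (t (j+1)), p u)) :=
        intervalIntegral_tendsto_integral_Ioi _ (hp_int_on (j+1)) ht_top
      have hlim2 : Tendsto (fun N => φ (x (ζ j)) * ∫ u in t (j+1)..t N, p u) atTop
          (nhds (φ (x (ζ j)) * ∫ u in Ioi (t (j+1)), p u)) := hlim.const_mul _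
      apply le_of_tendsto hlim2
      filter_upwards [eventually_ge_atTop (j+1)] with N hN
      have h1 := claim N hN
      have h2 : 0 ≤ g (t N) := hA _ (ht_mono.monotone (le_trans hj (le_trans (Nat.le_succ j) hN)))
      linarith
    -- bound each term of the sum for j ≥ K
    have hφ_meas : Measurable (fun u : ℝ => ENNReal.ofReal (1 / φ u)) :=
      (measurable_const.div hφ_cont.measurable).ennreal_ofReal
    have hterm : ∀ j, K ≤ j →
        ENNReal.ofReal (∫ s in t j..ζ j, (1 / r s) * (∫ u in Ioi (t (j+1)), p u))
          ≤ ∫⁻ u in Ioc (x (t j)) (x (ζ j)), ENNReal.ofReal (1 / φ u) := by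
      intro j hj
      have htKj : t K ≤ t j := ht_mono.monotone hj
      have hζj_tK : t K ≤ ζ j := le_trans htKj (hζ j).1
      have hζj_pos : 0 < x (ζ j) := hxpos _ hζj_tK
      have hφζ : 0 < φ (x (ζ j)) := hφ_pos _ hζj_pos
      have hab : x (t j) ≤ x (ζ j) := hx_mono _ _ htKj (hζ j).1
      have hma : m ≤ x (t j) := hx_mono _ _ le_rfl htKj
      have h1 : ∫ s in t j..ζ j, (1 / r s) * (∫ u in Ioi (t (j+1)), p u)
          ≤ (x (ζ j) - x (t j)) / φ (x (ζ j)) := by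
        have hcomp : ∀ s ∈ Icc (t j) (ζ j),
            (1 / r s) * (∫ u in Ioi (t (j+1)), p u) ≤ x' s / φ (x (ζ j)) := by
          intro s hs
          have hs0 : s ∈ Ici (t 0) := le_trans (ht0 j) hs.1
          have hstK : t K ≤ s := le_trans htKj hs.1
          have hgs : φ (x (ζ j)) * (∫ u in Ioi (t (j+1)), p u) ≤ g s :=
            le_trans (hg_low j hj) (hg_anti s (t (j+1)) hstK (le_trans hs.2 (hζ j).2))
          have hrs : 0 < r s := hr_pos s hs0
          rw [show (1 / r s) * (∫ u in Ioi (t (j+1)), p u)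
              = (∫ u in Ioi (t (j+1)), p u) / r s by ring,
            div_le_div_iff₀ hrs hφζ]
          have hgdef : g s = r s * x' s := rfl
          nlinarith
        have hint1 : IntervalIntegrable
            (fun s => (1 / r s) * (∫ u in Ioi (t (j+1)), p u)) volume (t j) (ζ j) := by
          apply ContinuousOn.intervalIntegrable
          apply ((continuousOn_const.div hr_cont
            (fun u hu => ne_of_gt (hr_pos u hu))).mul continuousOn_const).mono
          rw [uIcc_of_le (hζ j).1]
          exact fun s hs => le_trans (ht0 j) hs.1
        have hint2 : IntervalIntegrable (fun s => x' s / φ (x (ζ j))) volume (t j) (ζ j) := by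
          apply ContinuousOn.intervalIntegrable
          apply (hx'_cont.div continuousOn_const (fun u _ => ne_of_gt hφζ)).mono
          rw [uIcc_of_le (hζ j).1]
          exact fun s hs => le_trans (ht0 j) hs.1
        have h2 := intervalIntegral.integral_mono_on (hζ j).1 hint1 hint2 hcomp
        rw [intervalIntegral.integral_div, FTCx _ _ (ht0 j) (hζ j).1] at h2
        exact h2
      calc ENNReal.ofReal (∫ s in t j..ζ j, (1 / r s) * (∫ u in Ioi (t (j+1)), p u))
          ≤ ENNReal.ofReal ((x (ζ j) - x (t j)) / φ (x (ζ j))) := ENNReal.ofReal_le_ofReal h1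
        _ = ENNReal.ofReal (1 / φ (x (ζ j))) * volume (Ioc (x (t j)) (x (ζ j))) := by
            rw [Real.volume_Ioc, ← ENNReal.ofReal_mul (one_div_nonneg.2 hφζ.le)]
            congr 1
            field_simp
        _ = ∫⁻ _ in Ioc (x (t j)) (x (ζ j)), ENNReal.ofReal (1 / φ (x (ζ j))) :=
            (setLIntegral_const _ _).symm
        _ ≤ ∫⁻ u in Ioc (x (t j)) (x (ζ j)), ENNReal.ofReal (1 / φ u) := by
            apply setLIntegral_mono hφ_meas
            intro u hu
            apply ENNReal.ofReal_le_ofReal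
            have hmu : m ≤ u := le_trans hma (le_of_lt hu.1)
            have hφu : 0 < φ u := lt_of_lt_of_le hφm (hφ_mono hmu)
            exact one_div_le_one_div_of_le hφu (hφ_mono hu.2)
    -- finiteness of the integral of 1/φ over (m, ∞)
    have hIoim : ∫⁻ u in Ioi m, ENNReal.ofReal (1 / φ u) < ⊤ := by
      have hsub : Ioi m ⊆ Ioc m (max m ε) ∪ Ioi ε := by
        intro u hu
        rcases le_or_gt u (max m ε) with h | h
        · exact Or.inl ⟨hu, h⟩
        · exact Or.inr (lt_of_le_of_lt (le_max_right m ε) h)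
      have h1 : ∫⁻ u in Ioc m (max m ε), ENNReal.ofReal (1 / φ u)
          ≤ ENNReal.ofReal (1 / φ m) * volume (Ioc m (max m ε)) := by
        rw [← setLIntegral_const]
        apply setLIntegral_mono measurable_const
        intro u hu
        apply ENNReal.ofReal_le_ofReal
        exact one_div_le_one_div_of_le hφm (hφ_mono (le_of_lt hu.1))
      calc ∫⁻ u in Ioi m, ENNReal.ofReal (1 / φ u)
          ≤ ∫⁻ u in Ioc m (max m ε) ∪ Ioi ε, ENNReal.ofReal (1 / φ u) :=
            lintegral_mono_set hsub
        _ ≤ (∫⁻ u in Ioc m (max m ε), ENNReal.ofReal (1 / φ u))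
            + ∫⁻ u in Ioi ε, ENNReal.ofReal (1 / φ u) := lintegral_union_le _ _ _
        _ < ⊤ := by
            apply ENNReal.add_lt_top.2
            refine ⟨lt_of_le_of_lt h1 ?_, hφ_int_pos⟩
            exact ENNReal.mul_lt_top ENNReal.ofReal_lt_top
              (by rw [Real.volume_Ioc]; exact ENNReal.ofReal_lt_top)
    -- disjointness and summation
    have hx_t_mono : ∀ i i' : ℕ, i ≤ i' → x (t (K+i)) ≤ x (t (K+i')) := fun i i' h =>
      hx_mono _ _ (ht_mono.monotone (Nat.le_add_right K i))
        (ht_mono.monotone (Nat.add_le_add_left h K))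
    have hS_le : ∀ i : ℕ, x (ζ (K+i)) ≤ x (t (K+i+1)) := fun i =>
      hx_mono _ _ (le_trans (ht_mono.monotone (Nat.le_add_right K i)) (hζ (K+i)).1)
        (hζ (K+i)).2
    have hS_disj : Pairwise (Function.onFun Disjoint fun i : ℕ => Ioc (x (t (K+i))) (x (ζ (K+i)))) := by
      have key : ∀ i i' : ℕ, i < i' →
          Disjoint (Ioc (x (t (K+i))) (x (ζ (K+i)))) (Ioc (x (t (K+i'))) (x (ζ (K+i')))) := by
        intro i i' h
        apply Set.disjoint_left.2
        rintro y hy1 hy2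
        have h3 : x (ζ (K+i)) ≤ x (t (K+i')) :=
          le_trans (hS_le i) (hx_t_mono (i+1) i' h)
        have := hy1.2
        have := hy2.1
        linarith
      intro i i' hne
      rcases lt_or_gt_of_ne hne with h | h
      · exact key _ _ h
      · exact (key _ _ h).symm
    have htail : ∑' i : ℕ, ∫⁻ u in Ioc (x (t (K+i))) (x (ζ (K+i))), ENNReal.ofReal (1 / φ u)
        ≤ ∫⁻ u in Ioi m, ENNReal.ofReal (1 / φ u) := by
      rw [← lintegral_iUnion (fun i => measurableSet_Ioc) hS_disj]
      apply lintegral_mono_set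
      rintro u hu
      simp only [mem_iUnion] at hu
      obtain ⟨i, hi⟩ := hu
      have : m ≤ x (t (K+i)) := by
        have := hx_t_mono 0 i (Nat.zero_le i)
        simpa using this
      exact lt_of_le_of_lt this hi.1
    -- final contradiction
    set F : ℕ → ENNReal := fun j => ENNReal.ofReal
      (∫ s in t j..ζ j, (1 / r s) * (∫ u in Ioi (t (j+1)), p u)) with hF_def
    have hle := tsum_le_range_add_tail F K
    rw [hsum] at hle
    have hfin : (∑ j ∈ Finset.range K, F j) + ∑' i, F (i + K) < ⊤ := by
      apply ENNReal.add_lt_top.2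
      constructor
      · exact ENNReal.sum_lt_top.2 (fun j _ => ENNReal.ofReal_lt_top)
      · apply lt_of_le_of_lt _ hIoim
        refine le_trans (ENNReal.tsum_le_tsum fun i => ?_) htail
        have h := hterm (K + i) (Nat.le_add_right K i)
        rw [hF_def]
        simpa [Nat.add_comm] using h
    exact absurd (lt_of_le_of_lt hle hfin) (lt_irrefl ⊤)

theorem stmt2
    (t ζ : ℕ → ℝ) (ht_mono : StrictMono t)
    (ht_top : Tendsto t atTop atTop)
    (hζ : ∀ k : ℕ, ζ k ∈ Icc (t k) (t (k+1)))
    (r : ℝ → ℝ) (hr_cont : ContinuousOn r (Ici (t 0)))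
    (hr_pos : ∀ s ∈ Ici (t 0), 0 < r s)
    (f : ℝ → ℝ → ℝ)
    (hf_cont : ContinuousOn (fun q : ℝ × ℝ => f q.1 q.2) ((Ici (t 0)) ×ˢ (univ : Set ℝ)))
    (hf_sign : ∀ s ∈ Ici (t 0), ∀ y : ℝ, y ≠ 0 → 0 < y * f s y)
    (x x' : ℝ → ℝ)
    (hx_deriv : ∀ s ∈ Ici (t 0), HasDerivAt x (x' s) s)
    (hx'_cont : ContinuousOn x' (Ici (t 0)))
    (hE : ∀ k : ℕ, ∀ s ∈ Ioo (t k) (t (k+1)),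
      HasDerivAt (fun u => r u * x' u) (-(f s (x (ζ k)))) s)
    (p : ℝ → ℝ) (hp_cont : ContinuousOn p (Ici (t 0)))
    (hp_nonneg : ∀ s ∈ Ici (t 0), 0 ≤ p s)
    (φ : ℝ → ℝ) (hφ_smooth : ContDiff ℝ 1 φ) (hφ_mono : Monotone φ)
    (hφ_sign : ∀ y : ℝ, y ≠ 0 → 0 < y * φ y)
    (hfp_pos : ∀ s ∈ Ici (t 0), ∀ y : ℝ, 0 < y → p s * φ y ≤ f s y)
    (hfp_neg : ∀ s ∈ Ici (t 0), ∀ y : ℝ, y < 0 → f s y ≤ p s * φ y)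
    (hr_int : ∫⁻ s in Ioi (t 0), ENNReal.ofReal (1 / r s) = ⊤)
    (ε : ℝ) (hε : 0 < ε)
    (hφ_int_pos : ∫⁻ u in Ioi ε, ENNReal.ofReal (1 / φ u) < ⊤)
    (hφ_int_neg : ∫⁻ u in Iio (-ε), ENNReal.ofReal (1 / (-φ u)) < ⊤)
    (hp_int : ∫⁻ u in Ioi (t 0), ENNReal.ofReal (p u) < ⊤)
    (hsum : ∑' j : ℕ, ENNReal.ofReal
        (∫ s in t j..ζ j, (1 / r s) * (∫ u in Ioi (t (j+1)), p u)) = ⊤) :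
    ∃ a b : ℕ → ℝ, Tendsto a atTop atTop ∧ Tendsto b atTop atTop ∧
      ∀ n : ℕ, x (a n) ≤ 0 ∧ 0 ≤ x (b n) := by
  have hfc : ∀ c : ℝ, ContinuousOn (fun s => f s c) (Ici (t 0)) := by
    intro c
    have : ContinuousOn (fun s : ℝ => ((s, c) : ℝ × ℝ)) (Ici (t 0)) :=
      (continuous_id.prodMk continuous_const).continuousOn
    exact hf_cont.comp this (fun s hs => ⟨hs, mem_univ _⟩)
  -- positive side
  have Hpos : ∀ T : ℝ, ∃ s, T ≤ s ∧ x s ≤ 0 := by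
    intro T
    by_contra h
    push_neg at h
    exact noEvPos t ζ ht_mono ht_top hζ r hr_cont hr_pos f hfc
      (fun s hs y hy => by
        have := hf_sign s hs y (ne_of_gt hy); nlinarith)
      x x' hx_deriv hx'_cont hE p hp_cont hp_nonneg φ hφ_smooth.continuous hφ_mono
      (fun y hy => by have := hφ_sign y (ne_of_gt hy); nlinarith)
      hfp_pos hr_int ε hε hφ_int_pos hp_int hsum T h
  -- negative side, by applying the key lemma to -x
  have Hneg : ∀ T : ℝ, ∃ s, T ≤ s ∧ 0 ≤ x s := by
    intro T
    by_contra h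
    push_neg at h
    refine noEvPos t ζ ht_mono ht_top hζ r hr_cont hr_pos
      (fun s y => -f s (-y))
      (fun c => (hfc (-c)).neg)
      (fun s hs y hy => by
        have := hf_sign s hs (-y) (by simp [ne_of_gt hy])
        show 0 < -f s (-y); nlinarith)
      (fun s => -x s) (fun s => -x' s)
      (fun s hs => (hx_deriv s hs).neg) hx'_cont.neg
      (fun k s hs => by
        have h1 := (hE k s hs).neg
        have : (fun u => -(r u * x' u)) = (fun u => r u * -x' u) := by
          funext u; ring
        rw [show (-fun u => r u * x' u) = (fun u => -(r u * x' u)) from rfl, this] at h1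
        simpa using h1)
      p hp_cont hp_nonneg
      (fun y => -φ (-y)) (hφ_smooth.continuous.comp continuous_neg).neg
      (fun a b hab => by
        simp only [neg_le_neg_iff]
        exact hφ_mono (neg_le_neg hab))
      (fun y hy => by
        have := hφ_sign (-y) (by simp [ne_of_gt hy])
        show 0 < -φ (-y); nlinarith)
      (fun s hs y hy => by
        have := hfp_neg s hs (-y) (by linarith)
        show p s * -φ (-y) ≤ -f s (-y); nlinarith)
      hr_int ε hε ?_ hp_int hsum T
      (fun s hs => by have := h s hs; show (0:ℝ) < -x s; linarith)
    -- transported integrability of 1/φ̃ on (ε, ∞)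
    have := lintegral_Ioi_neg (fun u => ENNReal.ofReal (1 / (-φ u))) ε
    calc ∫⁻ u in Ioi ε, ENNReal.ofReal (1 / -φ (-u))
        = ∫⁻ u in Iio (-ε), ENNReal.ofReal (1 / (-φ u)) := this
      _ < ⊤ := hφ_int_neg
  -- assemble the sequences
  choose A hA hA0 using fun n : ℕ => Hpos n
  choose B hB hB0 using fun n : ℕ => Hneg n
  refine ⟨A, B, ?_, ?_, fun n => ⟨hA0 n, hB0 n⟩⟩
  · exact tendsto_atTop_mono hA tendsto_natCast_atTop_atTop
  · exact tendsto_atTop_mono hB tendsto_natCast_atTop_atTop
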